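/- Let α, β, k₀, k₁, k₂, k₃ be nonnegative integers with k₀ ≤ α and k₁ + k₂ + k₃ ≤ β. Then, as natural numbers, the product D₁·D₂·D₃·D₄ divides the product N₁·N₂·N₃·N₄, where N₁ = ∏_{i=0}^{k₀−1} ((2^α − 2^i)·2^β), N₂ = ∏_{i=0}^{k₁−1} ((8^β − 4^β·2^i)·2^α), N₃ = ∏_{i=0}^{k₂−1} ((4^β − 2^{β+k₁+i})·2^α), N₄ = ∏_{i=0}^{k₃−1} (2^β − 2^{k₁+k₂+i}), D₁ = ∏_{i=0}^{k₀−1} (2^{k₀+k₁+k₂+k₃} − 2^{k₁+k₂+k₃+i}), D₂ = ∏_{i=0}^{k₁−1} ((8^{k₁} − 4^{k₁}·2^i)·2^{k₀+2k₂+k₃}), D₃ = ∏_{i=0}^{k₂−1} ((4^{k₂} − 2^{k₂+i})·2^{k₀+2k₁+k₃}), D₄ = ∏_{i=0}^{k₃−1} (2^{k₁+k₂+k₃} − 2^{k₁+k₂+i}); empty products are 1. -/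
import Mathlib


open Finset

/-- `g n = ∏_{j=1}^{n} (2^j - 1)`. -/
def g (n : ℕ) : ℕ := ∏ j ∈ range n, (2 ^ (j + 1) - 1)

/-- `T a k = ∏_{i<k} (2^(a-i) - 1)`, the top `k` block of `g a`. -/
def T (a k : ℕ) : ℕ := ∏ i ∈ range k, (2 ^ (a - i) - 1)

lemma g_pos (n : ℕ) : 0 < g n := by
  refine Finset.prod_pos fun j _ => ?_
  have : (2:ℕ) ^ (j + 1) ≥ 2 ^ 1 := Nat.pow_le_pow_right (by norm_num) (by omega)
  omega

lemma g_succ (n : ℕ) : g (n + 1) = g n * (2 ^ (n + 1) - 1) :=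
  Finset.prod_range_succ _ n

lemma g_zero : g 0 = 1 := rfl

lemma sub_pow_eq (a b : ℕ) (h : b ≤ a) : 2 ^ a - 2 ^ b = 2 ^ b * (2 ^ (a - b) - 1) := by
  rw [Nat.mul_sub, mul_one, ← pow_add]
  congr 2
  omega

/-- q-binomial integrality (q = 2), divisibility form. -/
lemma g_binom : ∀ m k, k ≤ m → g k * g (m - k) ∣ g m := by
  intro m
  induction m with
  | zero => intro k hk; interval_cases k; simp [g_zero]
  | succ m ih =>
    intro k hk
    rcases Nat.eq_zero_or_pos k with rfl | hk0
    · simp [g_zero]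
    rcases Nat.lt_or_ge k (m + 1) with hlt | hge
    · -- 1 ≤ k ≤ m
      have hkm : k ≤ m := by omega
      have key : (2:ℕ) ^ (m + 1) - 1 =
          (2 ^ (m + 1 - k) - 1) + 2 ^ (m + 1 - k) * (2 ^ k - 1) := by
        have h1 : (2:ℕ) ^ (m + 1) = 2 ^ (m + 1 - k) * 2 ^ k := by
          rw [← pow_add]; congr 1; omega
        have h2 : (1:ℕ) ≤ 2 ^ (m + 1 - k) := Nat.one_le_two_pow
        have hXY : (2:ℕ) ^ (m + 1 - k) ≤ 2 ^ (m + 1 - k) * 2 ^ k :=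
          Nat.le_mul_of_pos_right _ (Nat.pos_of_ne_zero (by positivity))
        rw [h1, Nat.mul_sub, mul_one]
        omega
      rw [g_succ, key, Nat.mul_add]
      refine dvd_add ?_ ?_
      · -- g k * g (m+1-k) ∣ g m * (2^(m+1-k) - 1)
        have hmk : m + 1 - k = (m - k) + 1 := by omega
        rw [hmk, g_succ, ← mul_assoc]
        exact mul_dvd_mul (ih k hkm) dvd_rfl
      · -- g k * g (m+1-k) ∣ g m * (2^(m+1-k) * (2^k - 1))
        have hk1 : k = (k - 1) + 1 := by omega
        have hgk : g k = g (k - 1) * (2 ^ k - 1) := by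
          conv_lhs => rw [hk1]
          rw [g_succ, ← hk1]
        have hmk : m + 1 - k = m - (k - 1) := by omega
        have hih := ih (k - 1) (by omega)
        calc g k * g (m + 1 - k)
            = (g (k - 1) * g (m - (k - 1))) * (2 ^ k - 1) := by
              rw [hgk, hmk]; ring
          _ ∣ g m * (2 ^ k - 1) := mul_dvd_mul hih dvd_rfl
          _ ∣ g m * (2 ^ (m + 1 - k) * (2 ^ k - 1)) :=
              ⟨2 ^ (m + 1 - k), by ring⟩
    · -- k = m + 1
      have : k = m + 1 := by omega
      subst this
      simp [g_zero]

/-- `g a` splits as the bottom `a - k` block times the top `k` block. -/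
lemma g_split (a : ℕ) : ∀ k, k ≤ a → g a = g (a - k) * T a k := by
  intro k
  induction k with
  | zero => simp [T, g_zero]
  | succ k ih =>
    intro hk
    have hk' : k ≤ a := by omega
    have h1 : a - k = (a - (k + 1)) + 1 := by omega
    have h2 : g (a - k) = g (a - (k + 1)) * (2 ^ (a - k) - 1) := by
      conv_lhs => rw [h1]
      rw [g_succ, ← h1]
    rw [ih hk', h2]
    simp only [T, Finset.prod_range_succ]
    ring

lemma T_self (k : ℕ) : T k k = g k := by
  have := g_split k k le_rfl
  simpa [g_zero] using this.symm

lemma g_dvd_T (a k : ℕ) (h : k ≤ a) : g k ∣ T a k := by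
  have h1 : g k * g (a - k) ∣ T a k * g (a - k) := by
    rw [mul_comm (T a k)]
    rw [← g_split a k h]
    exact g_binom a k h
  exact (mul_dvd_mul_iff_right (g_pos (a - k)).ne').mp h1

lemma prod_form (k : ℕ) (f e : ℕ → ℕ) (a : ℕ)
    (hf : ∀ i < k, f i = 2 ^ (e i) * (2 ^ (a - i) - 1)) :
    ∏ i ∈ range k, f i = 2 ^ (∑ i ∈ range k, e i) * T a k := by
  rw [← Finset.prod_pow_eq_pow_sum, T, ← Finset.prod_mul_distrib]
  exact Finset.prod_congr rfl fun i hi => hf i (mem_range.mp hi)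

/-- The denominator product `D₁·D₂·D₃·D₄` of the Mixed Generalized Gaussian Number divides
its numerator product `N₁·N₂·N₃·N₄` as natural numbers. -/
theorem MGN_denom_dvd_num (α β k₀ k₁ k₂ k₃ : ℕ) (h₀ : k₀ ≤ α) (h : k₁ + k₂ + k₃ ≤ β) :
    ((∏ i ∈ range k₀, (2 ^ (k₀ + k₁ + k₂ + k₃) - 2 ^ (k₁ + k₂ + k₃ + i))) *
     (∏ i ∈ range k₁, ((8 ^ k₁ - 4 ^ k₁ * 2 ^ i) * 2 ^ (k₀ + 2 * k₂ + k₃))) *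
     (∏ i ∈ range k₂, ((4 ^ k₂ - 2 ^ (k₂ + i)) * 2 ^ (k₀ + 2 * k₁ + k₃))) *
     (∏ i ∈ range k₃, (2 ^ (k₁ + k₂ + k₃) - 2 ^ (k₁ + k₂ + i)))) ∣
    ((∏ i ∈ range k₀, ((2 ^ α - 2 ^ i) * 2 ^ β)) *
     (∏ i ∈ range k₁, ((8 ^ β - 4 ^ β * 2 ^ i) * 2 ^ α)) *
     (∏ i ∈ range k₂, ((4 ^ β - 2 ^ (β + k₁ + i)) * 2 ^ α)) *
     (∏ i ∈ range k₃, (2 ^ β - 2 ^ (k₁ + k₂ + i)))) := by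
  have h8 : ∀ n : ℕ, (8:ℕ) ^ n = 2 ^ (3 * n) := by
    intro n; rw [show (8:ℕ) = 2 ^ 3 from rfl, ← pow_mul]
  have h4 : ∀ n : ℕ, (4:ℕ) ^ n = 2 ^ (2 * n) := by
    intro n; rw [show (4:ℕ) = 2 ^ 2 from rfl, ← pow_mul]
  -- rewrite the eight products
  have hD1 : (∏ i ∈ range k₀, (2 ^ (k₀ + k₁ + k₂ + k₃) - 2 ^ (k₁ + k₂ + k₃ + i)))
      = 2 ^ (∑ i ∈ range k₀, (k₁ + k₂ + k₃ + i)) * T k₀ k₀ := by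
    refine prod_form _ _ _ _ fun i hi => ?_
    rw [sub_pow_eq _ _ (by omega),
        show k₀ + k₁ + k₂ + k₃ - (k₁ + k₂ + k₃ + i) = k₀ - i by omega]
  have hD2 : (∏ i ∈ range k₁, ((8 ^ k₁ - 4 ^ k₁ * 2 ^ i) * 2 ^ (k₀ + 2 * k₂ + k₃)))
      = 2 ^ (∑ i ∈ range k₁, (k₀ + 2 * k₂ + k₃ + 2 * k₁ + i)) * T k₁ k₁ := by
    refine prod_form _ _ _ _ fun i hi => ?_
    rw [h8, h4, ← pow_add, sub_pow_eq _ _ (by omega),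
        show 3 * k₁ - (2 * k₁ + i) = k₁ - i by omega,
        show k₀ + 2 * k₂ + k₃ + 2 * k₁ + i = (2 * k₁ + i) + (k₀ + 2 * k₂ + k₃) by omega,
        pow_add]
    ring
  have hD3 : (∏ i ∈ range k₂, ((4 ^ k₂ - 2 ^ (k₂ + i)) * 2 ^ (k₀ + 2 * k₁ + k₃)))
      = 2 ^ (∑ i ∈ range k₂, (k₀ + 2 * k₁ + k₃ + k₂ + i)) * T k₂ k₂ := by
    refine prod_form _ _ _ _ fun i hi => ?_
    rw [h4, sub_pow_eq _ _ (by omega),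
        show 2 * k₂ - (k₂ + i) = k₂ - i by omega,
        show k₀ + 2 * k₁ + k₃ + k₂ + i = (k₂ + i) + (k₀ + 2 * k₁ + k₃) by omega,
        pow_add]
    ring
  have hD4 : (∏ i ∈ range k₃, (2 ^ (k₁ + k₂ + k₃) - 2 ^ (k₁ + k₂ + i)))
      = 2 ^ (∑ i ∈ range k₃, (k₁ + k₂ + i)) * T k₃ k₃ := by
    refine prod_form _ _ _ _ fun i hi => ?_
    rw [sub_pow_eq _ _ (by omega),
        show k₁ + k₂ + k₃ - (k₁ + k₂ + i) = k₃ - i by omega]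
  have hN1 : (∏ i ∈ range k₀, ((2 ^ α - 2 ^ i) * 2 ^ β))
      = 2 ^ (∑ i ∈ range k₀, (β + i)) * T α k₀ := by
    refine prod_form _ _ _ _ fun i hi => ?_
    rw [sub_pow_eq _ _ (by omega), show β + i = i + β by omega, pow_add]
    ring
  have hN2 : (∏ i ∈ range k₁, ((8 ^ β - 4 ^ β * 2 ^ i) * 2 ^ α))
      = 2 ^ (∑ i ∈ range k₁, (α + 2 * β + i)) * T β k₁ := by
    refine prod_form _ _ _ _ fun i hi => ?_
    rw [h8, h4, ← pow_add, sub_pow_eq _ _ (by omega),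
        show 3 * β - (2 * β + i) = β - i by omega,
        show α + 2 * β + i = (2 * β + i) + α by omega, pow_add]
    ring
  have hN3 : (∏ i ∈ range k₂, ((4 ^ β - 2 ^ (β + k₁ + i)) * 2 ^ α))
      = 2 ^ (∑ i ∈ range k₂, (α + β + k₁ + i)) * T (β - k₁) k₂ := by
    refine prod_form _ _ _ _ fun i hi => ?_
    rw [h4, sub_pow_eq _ _ (by omega),
        show 2 * β - (β + k₁ + i) = (β - k₁) - i by omega,
        show α + β + k₁ + i = (β + k₁ + i) + α by omega, pow_add]
    ring
  have hN4 : (∏ i ∈ range k₃, (2 ^ β - 2 ^ (k₁ + k₂ + i)))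
      = 2 ^ (∑ i ∈ range k₃, (k₁ + k₂ + i)) * T (β - k₁ - k₂) k₃ := by
    refine prod_form _ _ _ _ fun i hi => ?_
    rw [sub_pow_eq _ _ (by omega),
        show β - (k₁ + k₂ + i) = β - k₁ - k₂ - i by omega]
  rw [hD1, hD2, hD3, hD4, hN1, hN2, hN3, hN4]
  have lhs_eq : (2 ^ (∑ i ∈ range k₀, (k₁ + k₂ + k₃ + i)) * T k₀ k₀) *
      (2 ^ (∑ i ∈ range k₁, (k₀ + 2 * k₂ + k₃ + 2 * k₁ + i)) * T k₁ k₁) *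
      (2 ^ (∑ i ∈ range k₂, (k₀ + 2 * k₁ + k₃ + k₂ + i)) * T k₂ k₂) *
      (2 ^ (∑ i ∈ range k₃, (k₁ + k₂ + i)) * T k₃ k₃)
      = 2 ^ ((∑ i ∈ range k₀, (k₁ + k₂ + k₃ + i)) +
             (∑ i ∈ range k₁, (k₀ + 2 * k₂ + k₃ + 2 * k₁ + i)) +
             (∑ i ∈ range k₂, (k₀ + 2 * k₁ + k₃ + k₂ + i)) +
             (∑ i ∈ range k₃, (k₁ + k₂ + i))) *
        (T k₀ k₀ * T k₁ k₁ * T k₂ k₂ * T k₃ k₃) := by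
    rw [pow_add, pow_add, pow_add]; ring
  have rhs_eq : (2 ^ (∑ i ∈ range k₀, (β + i)) * T α k₀) *
      (2 ^ (∑ i ∈ range k₁, (α + 2 * β + i)) * T β k₁) *
      (2 ^ (∑ i ∈ range k₂, (α + β + k₁ + i)) * T (β - k₁) k₂) *
      (2 ^ (∑ i ∈ range k₃, (k₁ + k₂ + i)) * T (β - k₁ - k₂) k₃)
      = 2 ^ ((∑ i ∈ range k₀, (β + i)) +
             (∑ i ∈ range k₁, (α + 2 * β + i)) +
             (∑ i ∈ range k₂, (α + β + k₁ + i)) +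
             (∑ i ∈ range k₃, (k₁ + k₂ + i))) *
        (T α k₀ * T β k₁ * T (β - k₁) k₂ * T (β - k₁ - k₂) k₃) := by
    rw [pow_add, pow_add, pow_add]; ring
  rw [lhs_eq, rhs_eq]
  refine mul_dvd_mul (pow_dvd_pow 2 ?_) ?_
  · refine Nat.add_le_add (Nat.add_le_add (Nat.add_le_add ?_ ?_) ?_) le_rfl <;>
      exact Finset.sum_le_sum fun i _ => by omega
  · refine mul_dvd_mul (mul_dvd_mul (mul_dvd_mul ?_ ?_) ?_) ?_ <;>
      rw [T_self]
    · exact g_dvd_T _ _ h₀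
    · exact g_dvd_T _ _ (by omega)
    · exact g_dvd_T _ _ (by omega)
    · exact g_dvd_T _ _ (by omega)
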